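/- Suppose the weight graph decomposes into K connected components C_1,…,C_K (i.e., w_{ij} = 0 whenever i and j lie in different components). Then the convex clustering loss splits as L(A) = Σ_{k=1}^K [κ_ε Σ_{i∈C_k}‖x_i − a_i‖² + λ·κ_pen·Σ_{i<j, i,j∈C_k} w_{ij}‖a_i − a_j‖], and for sufficiently large finite λ the global minimizer satisfies a_i = x̄_k for all i ∈ C_k, where x̄_k is the mean of {x_i : i ∈ C_k}. -/

import Mathlib

/-- The graph associated with a nonnegative weight matrix: an edge between `i ≠ j`
whenever the weight between them is positive (symmetrized). -/
def weightGraph (n : ℕ) (w : Fin n → Fin n → ℝ) : SimpleGraph (Fin n) where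
  Adj i j := i ≠ j ∧ (0 < w i j ∨ 0 < w j i)
  symm := ⟨by intro i j ⟨hne, hw⟩; exact ⟨hne.symm, hw.symm⟩⟩
  loopless := ⟨by intro i ⟨hne, _⟩; exact hne rfl⟩

private lemma walk_norm_bound {n p : ℕ} (a : Fin n → EuclideanSpace ℝ (Fin p))
    {G : SimpleGraph (Fin n)} {i j : Fin n} (q : G.Walk i j) :
    ‖a i - a j‖ ≤ (q.darts.map (fun d => ‖a d.toProd.1 - a d.toProd.2‖)).sum := by
  induction q with
  | nil => simp
  | @cons u v x h q ih =>
    rw [SimpleGraph.Walk.darts_cons, List.map_cons, List.sum_cons]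
    calc ‖a u - a x‖ ≤ ‖a u - a v‖ + ‖a v - a x‖ :=
          norm_sub_le_norm_sub_add_norm_sub _ _ _
      _ ≤ _ := by exact add_le_add le_rfl ih

theorem loss_splits_and_componentwise_means_minimize
    (n p K : ℕ) (X : Fin n → EuclideanSpace ℝ (Fin p))
    (κε κpen : ℝ) (hκε : 0 < κε) (hκpen : 0 < κpen)
    (w : Fin n → Fin n → ℝ) (hw : ∀ i j, 0 ≤ w i j) (hsymm : ∀ i j, w i j = w j i)
    (c : Fin n → Fin K) (hsurj : Function.Surjective c)
    (hcross : ∀ i j, c i ≠ c j → w i j = 0)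
    (hconn : ∀ i j, c i = c j → (weightGraph n w).Reachable i j)
    (L : ℝ → (Fin n → EuclideanSpace ℝ (Fin p)) → ℝ)
    (hL : ∀ lam A, L lam A = κε * (∑ i, ‖X i - A i‖ ^ 2) +
      lam * κpen * ∑ i, ∑ j, if i < j then w i j * ‖A i - A j‖ else 0) :
    (∀ lam A, L lam A = ∑ k : Fin K,
      (κε * (∑ i, if c i = k then ‖X i - A i‖ ^ 2 else 0) +
        lam * κpen * ∑ i, ∑ j,
          if i < j ∧ c i = k ∧ c j = k then w i j * ‖A i - A j‖ else 0)) ∧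
    (∃ lam₀ : ℝ, 0 ≤ lam₀ ∧ ∀ lam ≥ lam₀, ∀ A,
      L lam (fun i =>
        ((Finset.univ.filter fun i' => c i' = c i).card : ℝ)⁻¹ •
          ∑ i' ∈ Finset.univ.filter fun i' => c i' = c i, X i') ≤ L lam A) := by
  classical
  constructor
  · -- Part 1: the loss splits componentwise
    intro lam A
    rw [hL]
    have hfid : (∑ k : Fin K, ∑ i, if c i = k then ‖X i - A i‖ ^ 2 else 0)
        = ∑ i, ‖X i - A i‖ ^ 2 := by
      rw [Finset.sum_comm]
      refine Finset.sum_congr rfl fun i _ => ?_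
      rw [Finset.sum_ite_eq Finset.univ (c i) (fun _ => ‖X i - A i‖ ^ 2),
        if_pos (Finset.mem_univ _)]
    have hpen : (∑ k : Fin K, ∑ i, ∑ j,
          if i < j ∧ c i = k ∧ c j = k then w i j * ‖A i - A j‖ else 0)
        = ∑ i, ∑ j, if i < j then w i j * ‖A i - A j‖ else 0 := by
      rw [Finset.sum_comm]
      refine Finset.sum_congr rfl fun i _ => ?_
      rw [Finset.sum_comm]
      refine Finset.sum_congr rfl fun j _ => ?_
      by_cases hij : i < j
      · by_cases hc : c i = c j
        · rw [if_pos hij]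
          have hcong : ∀ k ∈ Finset.univ, (if i < j ∧ c i = k ∧ c j = k then w i j * ‖A i - A j‖ else 0)
              = (if c i = k then w i j * ‖A i - A j‖ else 0) := by
            intro k _
            refine if_congr ?_ rfl rfl
            constructor
            · rintro ⟨_, h1', _⟩; exact h1'
            · intro h1'; exact ⟨hij, h1', hc.symm.trans h1'⟩
          rw [Finset.sum_congr rfl hcong,
            Finset.sum_ite_eq Finset.univ (c i) (fun _ => w i j * ‖A i - A j‖)]
          simp
        · rw [if_pos hij, hcross i j hc, zero_mul]
          apply Finset.sum_eq_zero; intro k _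
          simp
      · rw [if_neg hij]
        apply Finset.sum_eq_zero; intro k _
        rw [if_neg]; rintro ⟨h, _⟩; exact hij h
    rw [Finset.sum_add_distrib, ← Finset.mul_sum, ← Finset.mul_sum, hfid, hpen]
  · -- Part 2
    set G := weightGraph n w with hG
    set B : Fin n → EuclideanSpace ℝ (Fin p) := fun i =>
        ((Finset.univ.filter fun i' => c i' = c i).card : ℝ)⁻¹ •
          ∑ i' ∈ Finset.univ.filter fun i' => c i' = c i, X i' with hB
    have hBconst : ∀ i j, c i = c j → B i = B j := by
      intro i j hij; simp only [hB, hij]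
    have hfib : ∀ k : Fin K, (Finset.univ.filter fun i' => c i' = k).Nonempty := by
      intro k; obtain ⟨i, hi⟩ := hsurj k; exact ⟨i, by simp [hi]⟩
    have hmean : ∀ k : Fin K,
        ∑ i ∈ Finset.univ.filter (fun i' => c i' = k), (B i - X i) = 0 := by
      intro k
      have hcard : (((Finset.univ.filter fun i' => c i' = k).card : ℕ) : ℝ) ≠ 0 := by
        exact_mod_cast (hfib k).card_pos.ne'
      rw [Finset.sum_sub_distrib]
      have hBv : ∀ i ∈ Finset.univ.filter (fun i' => c i' = k), B i =
          ((Finset.univ.filter fun i' => c i' = k).card : ℝ)⁻¹ •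
            ∑ i' ∈ Finset.univ.filter fun i' => c i' = k, X i' := by
        intro i hi
        simp only [Finset.mem_filter] at hi
        simp only [hB, hi.2]
      rw [Finset.sum_congr rfl hBv, Finset.sum_const, ← Nat.cast_smul_eq_nsmul ℝ,
        smul_smul, mul_inv_cancel₀ hcard, one_smul, sub_self]
    choose r hrc using hsurj
    set M := ∑ i, ‖B i - X i‖ with hM
    have hM0 : 0 ≤ M := Finset.sum_nonneg fun i _ => norm_nonneg _
    set s : Finset ℝ := insert 1
      (((Finset.univ ×ˢ Finset.univ).filter fun q : Fin n × Fin n => 0 < w q.1 q.2).image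
        fun q => w q.1 q.2) with hs
    have hsne : s.Nonempty := ⟨1, Finset.mem_insert_self _ _⟩
    set wmin := s.min' hsne with hwmin
    have hwmin_pos : 0 < wmin := by
      have hmem : wmin ∈ s := s.min'_mem hsne
      rcases Finset.mem_insert.mp hmem with h | h
      · rw [h]; norm_num
      · obtain ⟨q, hq, hq2⟩ := Finset.mem_image.mp h
        rw [Finset.mem_filter] at hq
        rw [← hq2]; exact hq.2
    have hwmin_le : ∀ i j, 0 < w i j → wmin ≤ w i j := by
      intro i j h
      apply Finset.min'_le
      rw [hs]
      exact Finset.mem_insert_of_mem (Finset.mem_image.mpr ⟨(i, j), by simp [h], rfl⟩)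
    refine ⟨4 * κε * M / (κpen * wmin), by positivity, ?_⟩
    intro lam hlam A
    have hlam0 : 0 ≤ lam := le_trans (by positivity) hlam
    have hlam' : 4 * κε * M ≤ lam * (κpen * wmin) :=
      (div_le_iff₀ (by positivity)).mp hlam
    set T := ∑ u : Fin n, ∑ v : Fin n, (if G.Adj u v then ‖A u - A v‖ else 0) with hT
    have hT0 : 0 ≤ T := Finset.sum_nonneg fun u _ => Finset.sum_nonneg fun v _ => by
      split; exacts [norm_nonneg _, le_rfl]
    -- key1 : path bound
    have key1 : ∀ i, ‖A i - A (r (c i))‖ ≤ T := by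
      intro i
      have hreach : G.Reachable i (r (c i)) := hconn _ _ (hrc (c i)).symm
      obtain ⟨q0⟩ := hreach
      set q : G.Walk i (r (c i)) := (q0.toPath : G.Walk i (r (c i))) with hq
      have hedges : (q.darts.map SimpleGraph.Dart.edge).Nodup :=
        q0.toPath.property.isTrail.edges_nodup
      have hdarts : q.darts.Nodup := List.Nodup.of_map _ hedges
      have hnd : (q.darts.map SimpleGraph.Dart.toProd).Nodup :=
        hdarts.map SimpleGraph.Dart.toProd_injective
      calc ‖A i - A (r (c i))‖
          ≤ (q.darts.map (fun d => ‖A d.toProd.1 - A d.toProd.2‖)).sum :=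
            walk_norm_bound A q
        _ = ∑ x ∈ (q.darts.map SimpleGraph.Dart.toProd).toFinset, ‖A x.1 - A x.2‖ := by
            rw [List.sum_toFinset _ hnd, List.map_map]
            rfl
        _ ≤ ∑ x ∈ (Finset.univ ×ˢ Finset.univ).filter
              (fun x : Fin n × Fin n => G.Adj x.1 x.2), ‖A x.1 - A x.2‖ := by
            apply Finset.sum_le_sum_of_subset_of_nonneg
            · intro x hx
              rw [List.mem_toFinset] at hx
              obtain ⟨d, hd, rfl⟩ := List.mem_map.mp hx
              refine Finset.mem_filter.mpr
                ⟨Finset.mem_product.mpr ⟨Finset.mem_univ _, Finset.mem_univ _⟩, d.adj⟩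
            · intros; exact norm_nonneg _
        _ = T := by rw [hT, Finset.sum_filter, Finset.sum_product]
    -- penalty notation
    set P := ∑ i : Fin n, ∑ j : Fin n, (if i < j then w i j * ‖A i - A j‖ else 0) with hP
    have hPalt : P = ∑ i : Fin n, ∑ j : Fin n,
        (if j < i then w i j * ‖A i - A j‖ else 0) := by
      rw [hP, Finset.sum_comm]
      refine Finset.sum_congr rfl fun x _ => Finset.sum_congr rfl fun y _ => ?_
      by_cases h : y < x
      · rw [if_pos h, if_pos h, hsymm y x, norm_sub_rev]
      · rw [if_neg h, if_neg h]
    have key2 : wmin * T ≤ 2 * P := by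
      rw [two_mul]
      nth_rewrite 2 [hPalt]
      rw [hP, hT, Finset.mul_sum, ← Finset.sum_add_distrib]
      refine Finset.sum_le_sum fun i _ => ?_
      rw [Finset.mul_sum, ← Finset.sum_add_distrib]
      refine Finset.sum_le_sum fun j _ => ?_
      by_cases hadj : G.Adj i j
      · rw [if_pos hadj]
        obtain ⟨hne, hpos⟩ := hadj
        have hwpos : 0 < w i j := by
          rcases hpos with h | h
          · exact h
          · rw [hsymm]; exact h
        rcases lt_or_gt_of_ne hne with h | h
        · rw [if_pos h, if_neg (asymm h), add_zero]
          exact mul_le_mul_of_nonneg_right (hwmin_le _ _ hwpos) (norm_nonneg _)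
        · rw [if_neg (asymm h), if_pos h, zero_add]
          exact mul_le_mul_of_nonneg_right (hwmin_le _ _ hwpos) (norm_nonneg _)
      · rw [if_neg hadj, mul_zero]
        have h1 : (0:ℝ) ≤ if i < j then w i j * ‖A i - A j‖ else 0 := by
          split; exacts [mul_nonneg (hw i j) (norm_nonneg _), le_rfl]
        have h2 : (0:ℝ) ≤ if j < i then w i j * ‖A i - A j‖ else 0 := by
          split; exacts [mul_nonneg (hw i j) (norm_nonneg _), le_rfl]
        linarith
    -- penalty at B vanishes
    have hPB : ∑ i : Fin n, ∑ j : Fin n,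
        (if i < j then w i j * ‖B i - B j‖ else 0) = 0 := by
      apply Finset.sum_eq_zero; intro i _
      apply Finset.sum_eq_zero; intro j _
      split
      · by_cases hc : c i = c j
        · rw [hBconst i j hc, sub_self, norm_zero, mul_zero]
        · rw [hcross i j hc, zero_mul]
      · rfl
    -- convexity
    have key4 : ∀ i, ‖X i - B i‖ ^ 2 + 2 * (inner ℝ (B i - X i) (A i - B i) : ℝ)
        ≤ ‖X i - A i‖ ^ 2 := by
      intro i
      have h0 : ‖(X i - B i) - (A i - B i)‖ ^ 2 = ‖X i - B i‖ ^ 2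
          - 2 * (inner ℝ (X i - B i) (A i - B i) : ℝ) + ‖A i - B i‖ ^ 2 :=
        norm_sub_sq_real _ _
      have h1 : X i - A i = (X i - B i) - (A i - B i) := by abel
      have h2 : (inner ℝ (B i - X i) (A i - B i) : ℝ)
          = - inner ℝ (X i - B i) (A i - B i) := by
        rw [← inner_neg_left, neg_sub]
      rw [h1, h0, h2]
      nlinarith [sq_nonneg ‖A i - B i‖]
    -- key5 : the cross term vanishes componentwise
    have key5 : ∑ i, (inner ℝ (B i - X i) (A (r (c i)) - B i) : ℝ) = 0 := by
      rw [← Finset.sum_fiberwise_of_maps_to (t := Finset.univ)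
        (g := c) (fun i _ => Finset.mem_univ (c i))
        (fun i => (inner ℝ (B i - X i) (A (r (c i)) - B i) : ℝ))]
      apply Finset.sum_eq_zero; intro k _
      have hcong : ∀ i ∈ Finset.univ.filter (fun i' => c i' = k),
          (inner ℝ (B i - X i) (A (r (c i)) - B i) : ℝ)
          = inner ℝ (B (r k) - X i) (A (r k) - B (r k)) := by
        intro i hi
        rw [Finset.mem_filter] at hi
        have hBi : B i = B (r k) := hBconst i (r k) (hi.2.trans (hrc k).symm)
        rw [hi.2, hBi]
      rw [Finset.sum_congr rfl hcong, ← sum_inner]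
      have hz2 : ∑ i ∈ Finset.univ.filter (fun i' => c i' = k), (B (r k) - X i) = 0 := by
        rw [← hmean k]
        apply Finset.sum_congr rfl
        intro i hi
        rw [Finset.mem_filter] at hi
        rw [hBconst (r k) i ((hrc k).trans hi.2.symm)]
      rw [hz2, inner_zero_left]
    -- split the inner-product sum
    have hsplit : ∑ i, (inner ℝ (B i - X i) (A i - B i) : ℝ)
        = ∑ i, (inner ℝ (B i - X i) (A i - A (r (c i))) : ℝ) := by
      have hterm : ∀ i ∈ Finset.univ, (inner ℝ (B i - X i) (A i - B i) : ℝ)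
          = (inner ℝ (B i - X i) (A i - A (r (c i))) : ℝ)
            + (inner ℝ (B i - X i) (A (r (c i)) - B i) : ℝ) := by
        intro i _
        rw [← inner_add_right]
        congr 1
        abel
      rw [Finset.sum_congr rfl hterm, Finset.sum_add_distrib, key5, add_zero]
    -- key6 : lower bound for the inner-product sum
    have key6 : -(M * T) ≤ ∑ i, (inner ℝ (B i - X i) (A i - A (r (c i))) : ℝ) := by
      have hterm : ∀ i ∈ Finset.univ,
          -(‖B i - X i‖ * T) ≤ (inner ℝ (B i - X i) (A i - A (r (c i))) : ℝ) := by
        intro i _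
        have h1 : |(inner ℝ (B i - X i) (A i - A (r (c i))) : ℝ)|
            ≤ ‖B i - X i‖ * ‖A i - A (r (c i))‖ := abs_real_inner_le_norm _ _
        have h2 : ‖B i - X i‖ * ‖A i - A (r (c i))‖ ≤ ‖B i - X i‖ * T :=
          mul_le_mul_of_nonneg_left (key1 i) (norm_nonneg _)
        have h3 := neg_abs_le (inner ℝ (B i - X i) (A i - A (r (c i))) : ℝ)
        linarith
      calc -(M * T) = ∑ i, -(‖B i - X i‖ * T) := by
            rw [hM, Finset.sum_mul, Finset.sum_neg_distrib]
        _ ≤ _ := Finset.sum_le_sum hterm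
    -- assemble
    rw [hL, hL]
    rw [hPB, mul_zero, add_zero]
    have c1 : (∑ i, ‖X i - B i‖ ^ 2) + 2 * (∑ i, (inner ℝ (B i - X i) (A i - B i) : ℝ))
        ≤ ∑ i, ‖X i - A i‖ ^ 2 := by
      have h := Finset.sum_le_sum (fun i (_ : i ∈ Finset.univ) => key4 i)
      rwa [Finset.sum_add_distrib, ← Finset.mul_sum] at h
    have hc : (∑ i, ‖X i - B i‖ ^ 2) - 2 * (M * T) ≤ ∑ i, ‖X i - A i‖ ^ 2 := by
      rw [hsplit] at c1
      linarith
    have e1 : κε * ((∑ i, ‖X i - B i‖ ^ 2) - 2 * (M * T))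
        ≤ κε * (∑ i, ‖X i - A i‖ ^ 2) := mul_le_mul_of_nonneg_left hc hκε.le
    have e2 : 4 * κε * M * T ≤ lam * (κpen * wmin) * T :=
      mul_le_mul_of_nonneg_right hlam' hT0
    have e3 : lam * κpen * (wmin * T) ≤ lam * κpen * (2 * P) :=
      mul_le_mul_of_nonneg_left key2 (by positivity)
    nlinarith [e1, e2, e3]
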